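/- Let h(n) = (n-2)(n-1)/2 + 1 for integers n ≥ 1 and let k_Δ ≥ 1 be an integer. For every integer j ≥ 1, the set { i ≥ 1 : h(i) < j and j ≤ h(i - 1 + k_Δ) } has strictly fewer than k_Δ elements. -/

import Mathlib

/-- The sequence from the PHANTOM liveness attack: h(n) = (n-2)(n-1)/2 + 1. -/
def h (n : ℤ) : ℤ := (n - 2) * (n - 1) / 2 + 1

lemma h_mono {a b : ℤ} (ha : 1 ≤ a) (hab : a ≤ b) : h a ≤ h b := by
  unfold h
  have : (a - 2) * (a - 1) ≤ (b - 2) * (b - 1) := by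
    rcases le_or_gt (a + b) 2 with hc | hc
    · obtain ⟨rfl, rfl⟩ : a = 1 ∧ b = 1 := by omega
      norm_num
    · nlinarith
  have := Int.ediv_le_ediv (by norm_num : (0:ℤ) < 2) this
  omega

lemma h_lb {i : ℤ} (hi : 1 ≤ i) : i - 1 ≤ h i := by
  unfold h
  have hprod : 2 * (i - 2) ≤ (i - 2) * (i - 1) := by
    rcases le_or_gt i 2 with hc | hc <;> nlinarith
  have := Int.ediv_le_ediv (by norm_num : (0:ℤ) < 2) hprod
  omega

/-- For every integer j ≥ 1, the set { i ≥ 1 : h(i) < j and j ≤ h(i - 1 + k_Δ) }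
    is finite and has strictly fewer than k_Δ elements. -/
theorem stmt_2 (kΔ : ℤ) (hkΔ : 1 ≤ kΔ) (j : ℤ) (hj : 1 ≤ j) :
    {i : ℤ | 1 ≤ i ∧ h i < j ∧ j ≤ h (i - 1 + kΔ)}.Finite ∧
      (({i : ℤ | 1 ≤ i ∧ h i < j ∧ j ≤ h (i - 1 + kΔ)}.ncard : ℤ) < kΔ) := by
  set S := {i : ℤ | 1 ≤ i ∧ h i < j ∧ j ≤ h (i - 1 + kΔ)} with hS
  have hsub : S ⊆ Set.Icc 1 j := by
    rintro i ⟨hi1, hi2, _⟩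
    exact ⟨hi1, by have := h_lb hi1; omega⟩
  have hfin : S.Finite := (Set.finite_Icc 1 j).subset hsub
  refine ⟨hfin, ?_⟩
  rcases Set.eq_empty_or_nonempty S with he | hne
  · simp [he]; omega
  · obtain ⟨i0, hi0, hmin⟩ := hfin.exists_minimalFor id S hne
    -- key: every i ∈ S satisfies i ≤ i0 + kΔ - 2
    have hkey : ∀ i ∈ S, i ≤ i0 + kΔ - 2 := by
      intro i hi
      by_contra hcon
      push_neg at hcon
      obtain ⟨hi1, hi2, hi3⟩ := hi
      obtain ⟨h01, h02, h03⟩ := hi0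
      have : h (i0 - 1 + kΔ) ≤ h i := h_mono (by omega) (by omega)
      omega
    have hlow : ∀ i ∈ S, i0 ≤ i := by
      intro i hi
      by_contra hcon
      push_neg at hcon
      have := hmin (j := i) hi (le_of_lt hcon)
      simp only [id] at this; omega
    have hsub2 : S ⊆ Set.Icc i0 (i0 + kΔ - 2) := fun i hi => ⟨hlow i hi, hkey i hi⟩
    have hcard : S.ncard ≤ (Set.Icc i0 (i0 + kΔ - 2)).ncard :=
      Set.ncard_le_ncard hsub2 (Set.finite_Icc _ _)
    have : (Set.Icc i0 (i0 + kΔ - 2)).ncard = (kΔ - 1).toNat := by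
      rw [show Set.Icc i0 (i0 + kΔ - 2) = ↑(Finset.Icc i0 (i0 + kΔ - 2)) by simp]
      rw [Set.ncard_coe_finset, Int.card_Icc]
      congr 1; omega
    rw [this] at hcard
    omega
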